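/- Let g : ℝ → ℝ satisfy g(0) = 0, g'(t) = (1 + 2 g(t)^2)^(-1/2) for t ≥ 0, extended oddly. Then g(ts)^2 ≥ t · g(s)^2 for all t ≥ 1 and s ≥ 0. -/

import Mathlib

theorem stmt_8 (g : ℝ → ℝ) (hg0 : g 0 = 0)
    (hgd : ∀ t : ℝ, 0 ≤ t → HasDerivAt g (1 / Real.sqrt (1 + 2 * g t ^ 2)) t)
    (hodd : ∀ t : ℝ, g (-t) = - g t) :
    ∀ t : ℝ, 1 ≤ t → ∀ s : ℝ, 0 ≤ s → t * g s ^ 2 ≤ g (t * s) ^ 2 := by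
  -- g is continuous on [0,∞)
  have hgc : ContinuousOn g (Set.Ici 0) := fun x hx =>
    ((hgd x hx).continuousAt).continuousWithinAt
  -- g is monotone on [0,∞)
  have hgm : MonotoneOn g (Set.Ici 0) := by
    apply monotoneOn_of_deriv_nonneg (convex_Ici 0) hgc
    · intro x hx
      rw [interior_Ici] at hx
      exact ((hgd x hx.le).differentiableAt).differentiableWithinAt
    · intro x hx
      rw [interior_Ici] at hx
      rw [(hgd x hx.le).deriv]
      positivity
  have hgnn : ∀ x : ℝ, 0 ≤ x → 0 ≤ g x := fun x hx => by
    simpa [hg0] using hgm Set.self_mem_Ici hx hx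
  -- derivative of h := g^2
  have hD : ∀ u : ℝ, 0 ≤ u →
      HasDerivAt (fun x => g x ^ 2) (2 * g u * (1 / Real.sqrt (1 + 2 * g u ^ 2))) u := by
    intro u hu
    have := (hgd u hu).fun_pow 2
    simpa [mul_comm, mul_assoc, mul_left_comm] using this
  -- monotonicity of x ↦ 2x/√(1+2x²)
  have hphi : ∀ a b : ℝ, 0 ≤ a → a ≤ b →
      2 * a * (1 / Real.sqrt (1 + 2 * a ^ 2)) ≤ 2 * b * (1 / Real.sqrt (1 + 2 * b ^ 2)) := by
    intro a b ha hab
    have hA2 : Real.sqrt (1 + 2 * a ^ 2) ^ 2 = 1 + 2 * a ^ 2 := Real.sq_sqrt (by positivity)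
    have hB2 : Real.sqrt (1 + 2 * b ^ 2) ^ 2 = 1 + 2 * b ^ 2 := Real.sq_sqrt (by positivity)
    have hApos : 0 < Real.sqrt (1 + 2 * a ^ 2) := Real.sqrt_pos.mpr (by positivity)
    have hBpos : 0 < Real.sqrt (1 + 2 * b ^ 2) := Real.sqrt_pos.mpr (by positivity)
    rw [mul_one_div, mul_one_div, div_le_div_iff₀ hApos hBpos]
    rcases eq_or_lt_of_le (ha.trans hab) with h | h
    · have ha0 : a = 0 := le_antisymm (hab.trans h.symm.le) ha
      rw [ha0, ← h]
    · have hsum : 0 < b * Real.sqrt (1 + 2 * a ^ 2) + a * Real.sqrt (1 + 2 * b ^ 2) :=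
        add_pos_of_pos_of_nonneg (mul_pos h hApos) (mul_nonneg ha hBpos.le)
      have hprod : (b * Real.sqrt (1 + 2 * a ^ 2) - a * Real.sqrt (1 + 2 * b ^ 2)) *
          (b * Real.sqrt (1 + 2 * a ^ 2) + a * Real.sqrt (1 + 2 * b ^ 2)) = b ^ 2 - a ^ 2 := by
        linear_combination b ^ 2 * hA2 - a ^ 2 * hB2
      have hdiff : 0 ≤ b ^ 2 - a ^ 2 := by nlinarith
      have : 0 ≤ b * Real.sqrt (1 + 2 * a ^ 2) - a * Real.sqrt (1 + 2 * b ^ 2) :=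
        nonneg_of_mul_nonneg_right (by rw [mul_comm, hprod]; exact hdiff) hsum
      linarith
  -- h := g² is convex on [0,∞)
  have hconv : ConvexOn ℝ (Set.Ici 0) (fun x => g x ^ 2) := by
    apply MonotoneOn.convexOn_of_deriv (convex_Ici 0)
    · exact fun x hx => (((hgd x hx).pow 2).continuousAt).continuousWithinAt
    · intro x hx
      rw [interior_Ici] at hx
      exact ((hD x hx.le).differentiableAt).differentiableWithinAt
    · intro x hx y hy hxy
      rw [interior_Ici] at hx hy
      rw [(hD x hx.le).deriv, (hD y hy.le).deriv]
      exact hphi _ _ (hgnn x hx.le) (hgm (Set.mem_Ici.mpr hx.le) (Set.mem_Ici.mpr hy.le) hxy)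
  intro t ht s hs
  have ht0 : 0 < t := lt_of_lt_of_le one_pos ht
  have hts : 0 ≤ t * s := mul_nonneg ht0.le hs
  have hw1 : (0:ℝ) ≤ 1 - 1/t := by
    have : 1/t ≤ 1 := by rw [div_le_one ht0]; exact ht
    linarith
  have hw2 : (0:ℝ) ≤ 1/t := by positivity
  have hsum : (1 - 1/t) + 1/t = 1 := by ring
  have hkey := hconv.2 (Set.self_mem_Ici (a := (0:ℝ))) (Set.mem_Ici.mpr hts)
    hw1 hw2 hsum
  have hpt : (1 - 1/t) • (0:ℝ) + (1/t) • (t * s) = s := by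
    simp only [smul_eq_mul]
    field_simp
    ring
  rw [hpt] at hkey
  simp only [hg0, smul_eq_mul] at hkey
  have : g s ^ 2 ≤ (1/t) * g (t*s) ^ 2 := by linarith [hkey]
  calc t * g s ^ 2 ≤ t * ((1/t) * g (t*s)^2) := by
        exact mul_le_mul_of_nonneg_left this ht0.le
    _ = g (t*s)^2 := by field_simp
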